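/- Quasi-locality of interaction terms after time evolution (Lemma 3). Let ξ₁ > 0, let ξ₂ and ξ̃₂ be positive integers with ξ̃₂ ≥ ξ₂, let v ≥ 0, 𝒞 > 0, g₂ > 0 and t ∈ ℝ. Let A₁ be a Hermitian operator satisfying ‖[O_X̂(A₁,t), O_Ŷ]‖ ≤ 𝒞·|X̂^{(ξ₂)}|²·e^{−(d(X̂,Ŷ) − v|t|)/ξ₁}·‖O_X̂‖·‖O_Ŷ‖ for all X̂, Ŷ ⊆ Λ and all operators supported on them. Let A₂ = Σ_{Z ⊆ Λ : diam(Z) ≤ ξ₂} a_Z, each a_Z supported on Z, with Σ_{Z ∋ i} ‖a_Z‖ ≤ g₂ for all i ∈ Λ. For each Z with diam(Z) ≤ ξ₂ define a_{t,Z[ξ̃₂]} := a_Z(A₁,t,Z[ξ̃₂]) and, for integers s ≥ 2, a_{t,Z[sξ̃₂]} := a_Z(A₁,t,Z[sξ̃₂]) − a_Z(A₁,t,Z[(s−1)ξ̃₂]) (local approximations via normalized partial trace). Then for every X ⊆ Λ and every real s₀ > 0: (i) for every integer s ≥ 2, Σ_{Z : diam(Z) ≤ ξ₂, Z[sξ̃₂]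 ∩ X ≠ ∅} ‖a_{t,Z[sξ̃₂]}‖ ≤ 2·(2ξ̃₂)^D·𝒞·γ³·g₂·e^{v|t|/ξ₁}·|X^{(s₀ξ̃₂)}|·(s+s₀)^D·e^{−(s−1)ξ̃₂/ξ₁}; and (ii) Σ_{Z : diam(Z) ≤ ξ₂, Z[ξ̃₂] ∩ X ≠ ∅} ‖a_{t,Z[ξ̃₂]}‖ ≤ (2ξ̃₂)^D·g₂·γ·|X^{(s₀ξ̃₂)}|·(s₀+1)^D. -/

import Mathlib

open scoped Classical

namespace LightCone

variable {Λ : Type} [Fintype Λ] [DecidableEq Λ]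

/-- `dist` is an integer-valued metric on `Λ`. -/
def IsMetricN (dist : Λ → Λ → ℕ) : Prop :=
  (∀ i j, dist i j = 0 ↔ i = j) ∧ (∀ i j, dist i j = dist j i) ∧
  (∀ i j k, dist i k ≤ dist i j + dist j k)

/-- `d(X,Y)`: the minimum distance between the subsets `X` and `Y`. -/
noncomputable def setDist (dist : Λ → Λ → ℕ) (X Y : Finset Λ) : ℕ :=
  sInf {n : ℕ | ∃ i ∈ X, ∃ j ∈ Y, dist i j = n}

/-- `diam(X) = 1 + max_{i,j ∈ X} d(i,j)`. -/
def diam (dist : Λ → Λ → ℕ) (X : Finset Λ) : ℕ :=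
  1 + X.sup fun i => X.sup fun j => dist i j

/-- `X[r] = {i ∈ Λ | d(i,X) ≤ r}`. -/
noncomputable def ball (dist : Λ → Λ → ℕ) (X : Finset Λ) (r : ℝ) : Finset Λ :=
  Finset.univ.filter fun i => ∃ j ∈ X, (dist i j : ℝ) ≤ r

/-- `net` is a choice of the coarse-grained lattice `Λ^{(ξ)}`:
a subset of minimum cardinality such that `net[ξ] = Λ`. -/
def IsNet (dist : Λ → Λ → ℕ) (ξ : ℝ) (net : Finset Λ) : Prop :=
  (∀ i : Λ, ∃ j ∈ net, (dist i j : ℝ) ≤ ξ) ∧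
  (∀ L : Finset Λ, (∀ i : Λ, ∃ j ∈ L, (dist i j : ℝ) ≤ ξ) → net.card ≤ L.card)

/-- `C` is a choice of the coarse-grained subset `X^{(ξ)} ⊆ Λ^{(ξ)}`:
a subset of `net` of minimum cardinality such that `C[ξ] ⊇ X`. -/
def IsCoarse (dist : Λ → Λ → ℕ) (ξ : ℝ) (net X C : Finset Λ) : Prop :=
  C ⊆ net ∧ (∀ i ∈ X, ∃ j ∈ C, (dist i j : ℝ) ≤ ξ) ∧
  (∀ C' : Finset Λ, C' ⊆ net → (∀ i ∈ X, ∃ j ∈ C', (dist i j : ℝ) ≤ ξ) → C.card ≤ C'.card)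

/-- `γ` is a geometric constant for the lattice `(Λ, dist)` in spatial dimension `D`. -/
def GeomConst (D : ℕ) (γ : ℝ) (dist : Λ → Λ → ℕ) : Prop :=
  (∀ X : Finset Λ, (X.card : ℝ) ≤ γ * (diam dist X : ℝ) ^ D) ∧
  (∀ (i : Λ) (r : ℝ), 1 ≤ r → ((ball dist {i} r).card : ℝ) ≤ γ * (2 * r) ^ D) ∧
  (∀ ξ : ℝ, 1 ≤ ξ → ∀ net X C : Finset Λ, IsNet dist ξ net → IsCoarse dist ξ net X C →
    (C.card : ℝ) ≤ max 1 (γ * ((diam dist X : ℝ) / ξ) ^ D)) ∧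
  (∀ ξ r : ℝ, 1 ≤ ξ → ξ ≤ r → ∀ net : Finset Λ, IsNet dist ξ net → ∀ i : Λ,
    ((net.filter fun j => r ≤ (dist i j : ℝ) ∧ (dist i j : ℝ) < r + ξ).card : ℝ)
      ≤ 2 * γ * D * (2 * r / ξ) ^ (D - 1))

variable (dim : Λ → ℕ)

/-- Operators on the total Hilbert space `⨂_{i ∈ Λ} ℂ^{dim i}`, realized concretely as
matrices indexed by the classical configurations `∀ i, Fin (dim i)`. -/
abbrev Op := Matrix (∀ i, Fin (dim i)) (∀ i, Fin (dim i)) ℂ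

/-- The operator norm (the `ℓ² → ℓ²` norm). -/
noncomputable def opNorm (M : Op dim) : ℝ := ‖Matrix.toEuclideanCLM (𝕜 := ℂ) M‖

/-- `M` is supported on `X`, i.e. `M = M_X ⊗ 1_{Xᶜ}`. -/
def SupportedOn (X : Finset Λ) (M : Op dim) : Prop :=
  (∀ a b : ∀ i, Fin (dim i), (∃ i ∉ X, a i ≠ b i) → M a b = 0) ∧
  (∀ a b a' b' : ∀ i, Fin (dim i),
    (∀ i ∈ X, a i = a' i) → (∀ i ∈ X, b i = b' i) →
    (∀ i ∉ X, a i = b i) → (∀ i ∉ X, a' i = b' i) → M a b = M a' b')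

/-- Heisenberg evolution `O(A,t) = e^{iAt} O e^{-iAt}`. -/
noncomputable def heis (A : Op dim) (t : ℝ) (O : Op dim) : Op dim :=
  NormedSpace.exp ((Complex.I * (t : ℂ)) • A) * O *
    NormedSpace.exp ((-(Complex.I * (t : ℂ))) • A)

/-- `‖[A,B]‖`. -/
noncomputable def commNorm (A B : Op dim) : ℝ := opNorm dim (A * B - B * A)

/-- The local approximation `(tr_{Xᶜ} M ⊗ 1_{Xᶜ}) / tr_{Xᶜ}(1)` of `M` on the subset `X`. -/
noncomputable def localApprox (X : Finset Λ) (M : Op dim) : Op dim :=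
  fun a b =>
    if ∀ i, i ∉ X → a i = b i then
      (∏ i ∈ Xᶜ, (dim i : ℂ))⁻¹ *
        ∑ c : ∀ i : {i : Λ // i ∉ X}, Fin (dim i.1),
          M (fun i => if h : i ∈ X then a i else c ⟨i, h⟩)
            (fun i => if h : i ∈ X then b i else c ⟨i, h⟩)
    else 0

/-- `h` is a long-range Hamiltonian with parameters `g₀`, `α` (in spatial dimension `D`). -/
def IsLongRange (D : ℕ) (dist : Λ → Λ → ℕ) (g₀ α : ℝ) (h : Finset Λ → Op dim) : Prop :=
  (∀ Z, (h Z).IsHermitian) ∧ (∀ Z, SupportedOn dim Z (h Z)) ∧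
  (∀ i j : Λ,
    ∑ Z ∈ Finset.univ.filter (fun Z : Finset Λ => i ∈ Z ∧ j ∈ Z), opNorm dim (h Z)
      ≤ g₀ * ((dist i j : ℝ) + 1) ^ (-α)) ∧
  (∀ (i : Λ) (r : ℝ), 1 ≤ r →
    ∑ Z ∈ Finset.univ.filter (fun Z : Finset Λ => i ∈ Z ∧ r ≤ (diam dist Z : ℝ)),
        opNorm dim (h Z)
      ≤ r ^ (-(α - (D : ℝ))))


section Aux

set_option synthInstance.maxHeartbeats 1000000
set_option maxHeartbeats 1000000
open Matrix
variable {Λ : Type} [Fintype Λ] [DecidableEq Λ] (dim : Λ → ℕ)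

lemma opNorm_nonneg (M : Op dim) : 0 ≤ opNorm dim M := norm_nonneg _

lemma opNorm_zero : opNorm dim (0 : Op dim) = 0 := by
  unfold opNorm; rw [map_zero, norm_zero]

lemma opNorm_neg (A : Op dim) : opNorm dim (-A) = opNorm dim A := by
  unfold opNorm; rw [map_neg, norm_neg]

lemma opNorm_sub_rev (A B : Op dim) : opNorm dim (A - B) = opNorm dim (B - A) := by
  rw [← opNorm_neg, neg_sub]

lemma opNorm_add_le (A B : Op dim) : opNorm dim (A + B) ≤ opNorm dim A + opNorm dim B := by
  unfold opNorm; rw [map_add]; exact norm_add_le _ _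

lemma opNorm_sub_le_add (A B C : Op dim) :
    opNorm dim (A - B) ≤ opNorm dim (A - C) + opNorm dim (C - B) := by
  rw [← sub_add_sub_cancel A C B]; exact opNorm_add_le dim _ _

lemma opNorm_mul_le (A B : Op dim) : opNorm dim (A * B) ≤ opNorm dim A * opNorm dim B := by
  unfold opNorm; rw [_root_.map_mul]; exact norm_mul_le _ _

lemma opNorm_smul (c : ℂ) (A : Op dim) : opNorm dim (c • A) = ‖c‖ * opNorm dim A := by
  unfold opNorm; rw [_root_.map_smul]
  exact norm_smul c (Matrix.toEuclideanCLM (𝕜 := ℂ) A)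

lemma opNorm_sum_le {ι : Type*} (s : Finset ι) (f : ι → Op dim) :
    opNorm dim (∑ i ∈ s, f i) ≤ ∑ i ∈ s, opNorm dim (f i) := by
  unfold opNorm; rw [map_sum]; exact norm_sum_le _ _

lemma opNorm_one_le : opNorm dim (1 : Op dim) ≤ 1 := by
  unfold opNorm; rw [_root_.map_one]
  exact ContinuousLinearMap.norm_id_le

lemma opNorm_le_one_of_unitary (W : Op dim) (h : Wᴴ * W = 1) : opNorm dim W ≤ 1 := by
  have h2 : opNorm dim W * opNorm dim W ≤ 1 := by
    unfold opNorm
    rw [← CStarRing.norm_star_mul_self, ← map_star, ← _root_.map_mul,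
      Matrix.star_eq_conjTranspose, h, _root_.map_one]
    exact ContinuousLinearMap.norm_id_le
  nlinarith [opNorm_nonneg dim W]

lemma exp_unitary (S : Op dim) (hS : Sᴴ = -S) :
    (NormedSpace.exp S)ᴴ * NormedSpace.exp S = 1 := by
  rw [← Matrix.exp_conjTranspose, hS, ← Matrix.exp_add_of_commute (-S) S (Commute.neg_left (Commute.refl S)),
    neg_add_cancel, NormedSpace.exp_zero]

lemma opNorm_heis_le (A : Op dim) (hA : A.IsHermitian) (t : ℝ) (O : Op dim) :
    opNorm dim (heis dim A t O) ≤ opNorm dim O := by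
  set S := (Complex.I * (t : ℂ)) • A with hSdef
  have hSH : Sᴴ = -S := by
    rw [hSdef, Matrix.conjTranspose_smul, hA.eq, ← neg_smul]
    congr 1
    simp [Complex.ext_iff]
  have h1 : opNorm dim (NormedSpace.exp S) ≤ 1 :=
    opNorm_le_one_of_unitary dim _ (exp_unitary dim S hSH)
  have hSH2 : (-S)ᴴ = -(-S) := by rw [Matrix.conjTranspose_neg, hSH, neg_neg]
  have h2 : opNorm dim (NormedSpace.exp (-S)) ≤ 1 :=
    opNorm_le_one_of_unitary dim _ (exp_unitary dim (-S) hSH2)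
  have hrw : heis dim A t O =
      NormedSpace.exp S * O * NormedSpace.exp (-S) := by
    unfold heis; rw [hSdef, neg_smul]
  rw [hrw]
  calc opNorm dim (NormedSpace.exp S * O * NormedSpace.exp (-S))
      ≤ opNorm dim (NormedSpace.exp S * O) * opNorm dim (NormedSpace.exp (-S)) :=
        opNorm_mul_le dim _ _
    _ ≤ opNorm dim (NormedSpace.exp S * O) * 1 := by
        have := opNorm_nonneg dim (NormedSpace.exp S * O)
        nlinarith
    _ = opNorm dim (NormedSpace.exp S * O) := mul_one _
    _ ≤ opNorm dim (NormedSpace.exp S) * opNorm dim O := opNorm_mul_le dim _ _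
    _ ≤ 1 * opNorm dim O := by nlinarith [opNorm_nonneg dim O]
    _ = opNorm dim O := one_mul _

end Aux
section Weyl
open Matrix
variable {Λ : Type} [Fintype Λ] [DecidableEq Λ] (dim : Λ → ℕ) (Y : Finset Λ)

abbrev OutT := ∀ i : {i : Λ // i ∉ Y}, Fin (dim i.1)

def res (a : ∀ i, Fin (dim i)) : OutT dim Y := fun i => a i.1

def setIn (a : ∀ i, Fin (dim i)) (c : OutT dim Y) : ∀ i, Fin (dim i) :=
  fun i => if h : i ∈ Y then a i else c ⟨i, h⟩

lemma res_setIn (a : ∀ i, Fin (dim i)) (c : OutT dim Y) :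
    res dim Y (setIn dim Y a c) = c := by
  funext i; simp [res, setIn, i.2]

lemma setIn_mem (a : ∀ i, Fin (dim i)) (c : OutT dim Y) {i : Λ} (h : i ∈ Y) :
    setIn dim Y a c i = a i := dif_pos h

lemma setIn_eq_iff (b a : ∀ i, Fin (dim i)) (c : OutT dim Y) :
    b = setIn dim Y a c ↔ (∀ i ∈ Y, b i = a i) ∧ res dim Y b = c := by
  constructor
  · rintro rfl
    exact ⟨fun i h => setIn_mem dim Y a c h, res_setIn dim Y a c⟩
  · rintro ⟨h1, h2⟩
    funext i
    by_cases h : i ∈ Y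
    · rw [setIn_mem dim Y a c h]; exact h1 i h
    · rw [← h2]; simp [setIn, h, res]

def sgn (ε : OutT dim Y → Bool) (c : OutT dim Y) : ℂ := if ε c then -1 else 1

lemma sgn_mul_self (ε : OutT dim Y → Bool) (c : OutT dim Y) :
    sgn dim Y ε c * sgn dim Y ε c = 1 := by
  unfold sgn; by_cases h : ε c <;> simp [h]

lemma star_sgn (ε : OutT dim Y → Bool) (c : OutT dim Y) :
    star (sgn dim Y ε c) = sgn dim Y ε c := by
  unfold sgn; by_cases h : ε c <;> simp [h]

noncomputable def weyl (f : OutT dim Y ≃ OutT dim Y) (ε : OutT dim Y → Bool) : Op dim :=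
  fun a b => if b = setIn dim Y a (f (res dim Y a)) then sgn dim Y ε (f (res dim Y a)) else 0

lemma weylT_inj (f : OutT dim Y ≃ OutT dim Y) {a b : ∀ i, Fin (dim i)}
    (h : setIn dim Y a (f (res dim Y a)) = setIn dim Y b (f (res dim Y b))) : a = b := by
  have hres : res dim Y a = res dim Y b := by
    have h2 := congrArg (res dim Y) h
    rw [res_setIn, res_setIn] at h2
    exact f.injective h2
  funext i
  by_cases hi : i ∈ Y
  · have h3 := congrFun h i
    rwa [setIn_mem _ _ _ _ hi, setIn_mem _ _ _ _ hi] at h3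
  · exact congrFun hres ⟨i, hi⟩

lemma weyl_mul_apply (f : OutT dim Y ≃ OutT dim Y) (ε : OutT dim Y → Bool)
    (M : Op dim) (a b : ∀ i, Fin (dim i)) :
    (weyl dim Y f ε * M) a b
      = sgn dim Y ε (f (res dim Y a)) * M (setIn dim Y a (f (res dim Y a))) b := by
  rw [Matrix.mul_apply, Finset.sum_eq_single (setIn dim Y a (f (res dim Y a)))]
  · simp [weyl]
  · intro c _ hc; simp [weyl, hc]
  · intro h; exact absurd (Finset.mem_univ _) h

lemma mul_weylH_apply (f : OutT dim Y ≃ OutT dim Y) (ε : OutT dim Y → Bool)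
    (M : Op dim) (a b : ∀ i, Fin (dim i)) :
    (M * (weyl dim Y f ε)ᴴ) a b
      = M a (setIn dim Y b (f (res dim Y b))) * sgn dim Y ε (f (res dim Y b)) := by
  rw [Matrix.mul_apply, Finset.sum_eq_single (setIn dim Y b (f (res dim Y b)))]
  · rw [Matrix.conjTranspose_apply]; simp [weyl, star_sgn]
  · intro c _ hc; rw [Matrix.conjTranspose_apply]; simp [weyl, hc]
  · intro h; exact absurd (Finset.mem_univ _) h

lemma weyl_conj_apply (f : OutT dim Y ≃ OutT dim Y) (ε : OutT dim Y → Bool)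
    (M : Op dim) (a b : ∀ i, Fin (dim i)) :
    (weyl dim Y f ε * M * (weyl dim Y f ε)ᴴ) a b
      = sgn dim Y ε (f (res dim Y a)) * sgn dim Y ε (f (res dim Y b)) *
        M (setIn dim Y a (f (res dim Y a))) (setIn dim Y b (f (res dim Y b))) := by
  rw [mul_weylH_apply, weyl_mul_apply]; ring

lemma weyl_mul_conjTranspose (f : OutT dim Y ≃ OutT dim Y) (ε : OutT dim Y → Bool) :
    weyl dim Y f ε * (weyl dim Y f ε)ᴴ = 1 := by
  ext a b
  rw [mul_weylH_apply]
  by_cases hab : a = b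
  · subst hab
    rw [Matrix.one_apply_eq]
    simp [weyl, sgn_mul_self]
  · have h0 : weyl dim Y f ε a (setIn dim Y b (f (res dim Y b))) = 0 := by
      rw [weyl, if_neg]
      intro hcontra
      exact hab (weylT_inj dim Y f hcontra.symm)
    rw [h0, zero_mul, Matrix.one_apply_ne hab]

lemma weyl_unitary (f : OutT dim Y ≃ OutT dim Y) (ε : OutT dim Y → Bool) :
    (weyl dim Y f ε)ᴴ * weyl dim Y f ε = 1 :=
  mul_eq_one_comm.mp (weyl_mul_conjTranspose dim Y f ε)

lemma supportedOn_conjTranspose {X : Finset Λ} {M : Op dim} (h : SupportedOn dim X M) :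
    SupportedOn dim X Mᴴ := by
  constructor
  · rintro a b ⟨i, hi, hne⟩
    rw [Matrix.conjTranspose_apply, h.1 b a ⟨i, hi, Ne.symm hne⟩, star_zero]
  · intro a b a' b' h1 h2 h3 h4
    rw [Matrix.conjTranspose_apply, Matrix.conjTranspose_apply,
      h.2 b a b' a' h2 h1 (fun i hi => (h3 i hi).symm) (fun i hi => (h4 i hi).symm)]

lemma supportedOn_weyl (f : OutT dim Y ≃ OutT dim Y) (ε : OutT dim Y → Bool) :
    SupportedOn dim Yᶜ (weyl dim Y f ε) := by
  constructor
  · rintro a b ⟨i, hi, hne⟩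
    have hiY : i ∈ Y := by simpa using hi
    rw [weyl, if_neg]
    intro hcond
    exact hne (by rw [hcond]; exact (setIn_mem dim Y _ _ hiY).symm)
  · intro a b a' b' h1 h2 h3 h4
    have hra : res dim Y a = res dim Y a' :=
      funext fun i => h1 i.1 (Finset.mem_compl.mpr i.2)
    have hrb : res dim Y b = res dim Y b' :=
      funext fun i => h2 i.1 (Finset.mem_compl.mpr i.2)
    have hab : ∀ i ∈ Y, b i = a i := fun i hi => (h3 i (by simp [hi])).symm
    have hab' : ∀ i ∈ Y, b' i = a' i := fun i hi => (h4 i (by simp [hi])).symm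
    have key : (b = setIn dim Y a (f (res dim Y a'))) ↔
        (b' = setIn dim Y a' (f (res dim Y a'))) := by
      rw [setIn_eq_iff, setIn_eq_iff, hrb]
      exact ⟨fun h => ⟨hab', h.2⟩, fun h => ⟨hab, h.2⟩⟩
    unfold weyl
    rw [hra]
    exact if_congr key rfl rfl

lemma prod_dim_eq : (∏ i ∈ Yᶜ, (dim i : ℂ)) = (Fintype.card (OutT dim Y) : ℂ) := by
  have h1 : Fintype.card (OutT dim Y) = ∏ i : {i : Λ // i ∉ Y}, dim i.1 := by
    rw [Fintype.card_pi]; simp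
  rw [h1]
  push_cast
  rw [← Finset.prod_coe_sort Yᶜ (fun i => (dim i : ℂ))]
  exact Fintype.prod_equiv (Equiv.subtypeEquivRight (fun i => Finset.mem_compl)) _ _
    (fun i => rfl)

lemma sgn_orthogonal (c c' : OutT dim Y) :
    ∑ ε : OutT dim Y → Bool, sgn dim Y ε c * sgn dim Y ε c' =
      if c = c' then ((2 : ℂ) ^ Fintype.card (OutT dim Y)) else 0 := by
  by_cases h : c = c'
  · subst h; rw [if_pos rfl]
    rw [Finset.sum_congr rfl (fun ε _ => sgn_mul_self dim Y ε c)]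
    simp [Finset.sum_const, Fintype.card_fun]
  · rw [if_neg h]
    set g : (OutT dim Y → Bool) → (OutT dim Y → Bool) :=
      fun ε => fun x => if x = c then !(ε x) else ε x with hg
    have hinv : Function.Involutive g := by
      intro ε; funext x; by_cases hx : x = c <;> simp [hg, hx]
    have key : ∀ ε : OutT dim Y → Bool,
        sgn dim Y (g ε) c * sgn dim Y (g ε) c' = -(sgn dim Y ε c * sgn dim Y ε c') := by
      intro ε
      unfold sgn
      simp only [hg, if_pos rfl, if_neg (Ne.symm h)]
      by_cases hc : ε c <;> by_cases hc' : ε c' <;> simp [hc, hc'] <;> ring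
    have hsum : ∑ ε : OutT dim Y → Bool, sgn dim Y ε c * sgn dim Y ε c'
        = -∑ ε : OutT dim Y → Bool, sgn dim Y ε c * sgn dim Y ε c' := by
      calc ∑ ε : OutT dim Y → Bool, sgn dim Y ε c * sgn dim Y ε c'
          = ∑ ε : OutT dim Y → Bool, sgn dim Y (g ε) c * sgn dim Y (g ε) c' :=
            (Equiv.sum_comp (Function.Involutive.toPerm g hinv)
              (fun ε => sgn dim Y ε c * sgn dim Y ε c')).symm
        _ = ∑ ε : OutT dim Y → Bool, -(sgn dim Y ε c * sgn dim Y ε c') :=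
            Finset.sum_congr rfl (fun ε _ => key ε)
        _ = -∑ ε : OutT dim Y → Bool, sgn dim Y ε c * sgn dim Y ε c' := by
            simp
    have h2 : (2 : ℂ) * ∑ ε : OutT dim Y → Bool, sgn dim Y ε c * sgn dim Y ε c' = 0 := by
      linear_combination hsum
    exact (mul_eq_zero.mp h2).resolve_left two_ne_zero

noncomputable def eqvZ [NeZero (Fintype.card (OutT dim Y))] :
    OutT dim Y ≃ ZMod (Fintype.card (OutT dim Y)) :=
  Fintype.equivOfCardEq (by rw [ZMod.card])

noncomputable def shiftE [NeZero (Fintype.card (OutT dim Y))]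
    (p : ZMod (Fintype.card (OutT dim Y))) : OutT dim Y ≃ OutT dim Y :=
  (eqvZ dim Y).trans ((Equiv.addRight p).trans (eqvZ dim Y).symm)

lemma card_outT_pos (hdim : ∀ i, 0 < dim i) : 0 < Fintype.card (OutT dim Y) :=
  Fintype.card_pos_iff.mpr ⟨fun i => ⟨0, hdim _⟩⟩

lemma twirl [NeZero (Fintype.card (OutT dim Y))] (M : Op dim) :
    localApprox dim Y M
      = (((Fintype.card (OutT dim Y)) * 2 ^ (Fintype.card (OutT dim Y)) : ℕ) : ℂ)⁻¹ •
        ∑ p : ZMod (Fintype.card (OutT dim Y)), ∑ ε : OutT dim Y → Bool,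
          weyl dim Y (shiftE dim Y p) ε * M * (weyl dim Y (shiftE dim Y p) ε)ᴴ := by
  have hNne : (Fintype.card (OutT dim Y) : ℂ) ≠ 0 := Nat.cast_ne_zero.mpr (NeZero.ne _)
  have h2ne : ((2:ℂ) ^ Fintype.card (OutT dim Y)) ≠ 0 := pow_ne_zero _ two_ne_zero
  ext a b
  rw [Matrix.smul_apply, Matrix.sum_apply]
  have hconj : ∀ p : ZMod (Fintype.card (OutT dim Y)),
      (∑ ε : OutT dim Y → Bool,
        weyl dim Y (shiftE dim Y p) ε * M * (weyl dim Y (shiftE dim Y p) ε)ᴴ) a b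
      = (if shiftE dim Y p (res dim Y a) = shiftE dim Y p (res dim Y b)
          then ((2:ℂ) ^ Fintype.card (OutT dim Y)) else 0) *
        M (setIn dim Y a (shiftE dim Y p (res dim Y a)))
          (setIn dim Y b (shiftE dim Y p (res dim Y b))) := by
    intro p
    rw [Matrix.sum_apply,
      Finset.sum_congr rfl (fun ε _ => weyl_conj_apply dim Y (shiftE dim Y p) ε M a b),
      ← Finset.sum_mul, sgn_orthogonal]
  rw [Finset.sum_congr rfl (fun p _ => hconj p)]
  by_cases hres : res dim Y a = res dim Y b
  · have hcond : ∀ i, i ∉ Y → a i = b i := fun i hi => congrFun hres ⟨i, hi⟩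
    have hla : localApprox dim Y M a b
        = (∏ i ∈ Yᶜ, (dim i : ℂ))⁻¹ *
          ∑ c : OutT dim Y, M (setIn dim Y a c) (setIn dim Y b c) := by
      simp only [localApprox, if_pos hcond]; rfl
    have hterm : ∀ p : ZMod (Fintype.card (OutT dim Y)),
        (if shiftE dim Y p (res dim Y a) = shiftE dim Y p (res dim Y b)
          then ((2:ℂ) ^ Fintype.card (OutT dim Y)) else 0) *
        M (setIn dim Y a (shiftE dim Y p (res dim Y a)))
          (setIn dim Y b (shiftE dim Y p (res dim Y b)))
        = ((2:ℂ) ^ Fintype.card (OutT dim Y)) *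
          M (setIn dim Y a (shiftE dim Y p (res dim Y a)))
            (setIn dim Y b (shiftE dim Y p (res dim Y a))) := by
      intro p
      rw [← hres, if_pos rfl]
    rw [hla, prod_dim_eq, Finset.sum_congr rfl (fun p _ => hterm p), ← Finset.mul_sum]
    have hswap : ∑ p : ZMod (Fintype.card (OutT dim Y)),
        M (setIn dim Y a (shiftE dim Y p (res dim Y a)))
          (setIn dim Y b (shiftE dim Y p (res dim Y a)))
        = ∑ c : OutT dim Y, M (setIn dim Y a c) (setIn dim Y b c) :=
      Equiv.sum_comp ((Equiv.addLeft ((eqvZ dim Y) (res dim Y a))).trans (eqvZ dim Y).symm)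
        (fun c => M (setIn dim Y a c) (setIn dim Y b c))
    rw [hswap, smul_eq_mul]
    rw [show (((Fintype.card (OutT dim Y)) * 2 ^ (Fintype.card (OutT dim Y)) : ℕ) : ℂ)
        = ((Fintype.card (OutT dim Y) : ℂ)) * 2 ^ (Fintype.card (OutT dim Y)) from by
      push_cast; ring]
    rw [mul_inv, mul_assoc, ← mul_assoc ((2:ℂ) ^ Fintype.card (OutT dim Y))⁻¹,
      inv_mul_cancel₀ h2ne, one_mul]
  · have hcond : ¬ ∀ i, i ∉ Y → a i = b i := by
      intro hc
      exact hres (funext fun i => hc i.1 i.2)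
    have hla : localApprox dim Y M a b = 0 := by simp only [localApprox, if_neg hcond]
    have hterm : ∀ p : ZMod (Fintype.card (OutT dim Y)),
        (if shiftE dim Y p (res dim Y a) = shiftE dim Y p (res dim Y b)
          then ((2:ℂ) ^ Fintype.card (OutT dim Y)) else 0) *
        M (setIn dim Y a (shiftE dim Y p (res dim Y a)))
          (setIn dim Y b (shiftE dim Y p (res dim Y b))) = 0 := by
      intro p
      rw [if_neg (fun hc => hres ((shiftE dim Y p).injective hc)), zero_mul]
    rw [hla, Finset.sum_congr rfl (fun p _ => hterm p)]
    simp

lemma opNorm_localApprox_le (hdim : ∀ i, 0 < dim i) (M : Op dim) :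
    opNorm dim (localApprox dim Y M) ≤ opNorm dim M := by
  haveI : NeZero (Fintype.card (OutT dim Y)) := ⟨(card_outT_pos dim Y hdim).ne'⟩
  set N := Fintype.card (OutT dim Y) with hN
  have hKpos : (0:ℝ) < ((N * 2 ^ N : ℕ) : ℝ) := by
    have : 0 < N := card_outT_pos dim Y hdim
    positivity
  have hterm : ∀ (p : ZMod N) (ε : OutT dim Y → Bool),
      opNorm dim (weyl dim Y (shiftE dim Y p) ε * M * (weyl dim Y (shiftE dim Y p) ε)ᴴ)
        ≤ opNorm dim M := by
    intro p ε
    have hW : opNorm dim (weyl dim Y (shiftE dim Y p) ε) ≤ 1 :=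
      opNorm_le_one_of_unitary dim _ (weyl_unitary dim Y _ ε)
    have hWH : opNorm dim ((weyl dim Y (shiftE dim Y p) ε)ᴴ) ≤ 1 := by
      apply opNorm_le_one_of_unitary
      rw [Matrix.conjTranspose_conjTranspose]
      exact weyl_mul_conjTranspose dim Y _ ε
    have h1 := opNorm_mul_le dim (weyl dim Y (shiftE dim Y p) ε * M)
      ((weyl dim Y (shiftE dim Y p) ε)ᴴ)
    have h2 := opNorm_mul_le dim (weyl dim Y (shiftE dim Y p) ε) M
    have n1 := opNorm_nonneg dim M
    have n2 := opNorm_nonneg dim (weyl dim Y (shiftE dim Y p) ε * M)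
    have n3 := opNorm_nonneg dim ((weyl dim Y (shiftE dim Y p) ε)ᴴ)
    have n4 := opNorm_nonneg dim (weyl dim Y (shiftE dim Y p) ε)
    nlinarith
  have hsum : opNorm dim (∑ p : ZMod N, ∑ ε : OutT dim Y → Bool,
      weyl dim Y (shiftE dim Y p) ε * M * (weyl dim Y (shiftE dim Y p) ε)ᴴ)
      ≤ ((N * 2 ^ N : ℕ) : ℝ) * opNorm dim M := by
    calc opNorm dim (∑ p : ZMod N, ∑ ε : OutT dim Y → Bool,
        weyl dim Y (shiftE dim Y p) ε * M * (weyl dim Y (shiftE dim Y p) ε)ᴴ)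
        ≤ ∑ p : ZMod N, opNorm dim (∑ ε : OutT dim Y → Bool,
            weyl dim Y (shiftE dim Y p) ε * M * (weyl dim Y (shiftE dim Y p) ε)ᴴ) :=
          opNorm_sum_le dim _ _
      _ ≤ ∑ p : ZMod N, ∑ ε : OutT dim Y → Bool, opNorm dim
            (weyl dim Y (shiftE dim Y p) ε * M * (weyl dim Y (shiftE dim Y p) ε)ᴴ) :=
          Finset.sum_le_sum (fun p _ => opNorm_sum_le dim _ _)
      _ ≤ ∑ _p : ZMod N, ∑ _ε : OutT dim Y → Bool, opNorm dim M :=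
          Finset.sum_le_sum (fun p _ => Finset.sum_le_sum (fun ε _ => hterm p ε))
      _ = ((N * 2 ^ N : ℕ) : ℝ) * opNorm dim M := by
          rw [Finset.sum_const, Finset.sum_const, smul_smul, Finset.card_univ, Finset.card_univ,
            ZMod.card, Fintype.card_fun, Fintype.card_bool, nsmul_eq_mul]
  rw [twirl dim Y M, opNorm_smul]
  have hnorm : ‖(((N * 2 ^ N : ℕ)) : ℂ)⁻¹‖ = (((N * 2 ^ N : ℕ)) : ℝ)⁻¹ := by
    rw [norm_inv, Complex.norm_natCast]
  rw [hnorm]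
  calc (((N * 2 ^ N : ℕ)) : ℝ)⁻¹ * opNorm dim (∑ p : ZMod N, ∑ ε : OutT dim Y → Bool,
        weyl dim Y (shiftE dim Y p) ε * M * (weyl dim Y (shiftE dim Y p) ε)ᴴ)
      ≤ (((N * 2 ^ N : ℕ)) : ℝ)⁻¹ * (((N * 2 ^ N : ℕ) : ℝ) * opNorm dim M) := by
        apply mul_le_mul_of_nonneg_left hsum
        positivity
    _ = opNorm dim M := by
        rw [← mul_assoc, inv_mul_cancel₀ (by positivity), one_mul]

lemma opNorm_sub_localApprox_le (hdim : ∀ i, 0 < dim i) (M : Op dim) (K : ℝ)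
    (h : ∀ W : Op dim, SupportedOn dim Yᶜ W → Wᴴ * W = 1 →
      opNorm dim (M * W - W * M) ≤ K) :
    opNorm dim (M - localApprox dim Y M) ≤ K := by
  haveI : NeZero (Fintype.card (OutT dim Y)) := ⟨(card_outT_pos dim Y hdim).ne'⟩
  set N := Fintype.card (OutT dim Y) with hN
  have hKpos : (0:ℝ) < ((N * 2 ^ N : ℕ) : ℝ) := by
    have : 0 < N := card_outT_pos dim Y hdim
    positivity
  have hNpos : 0 < N := card_outT_pos dim Y hdim
  have hcne : (((N * 2 ^ N : ℕ)) : ℂ) ≠ 0 := by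
    have h0 : (N * 2 ^ N : ℕ) ≠ 0 := by positivity
    exact Nat.cast_ne_zero.mpr h0
  have hM : M = (((N * 2 ^ N : ℕ)) : ℂ)⁻¹ • ∑ _p : ZMod N, ∑ _ε : OutT dim Y → Bool, M := by
    have hsumM : (∑ _p : ZMod N, ∑ _ε : OutT dim Y → Bool, M) = (((N * 2 ^ N : ℕ)) : ℂ) • M := by
      rw [Finset.sum_const, Finset.sum_const, smul_smul, Finset.card_univ, Finset.card_univ,
        ZMod.card, Fintype.card_fun, Fintype.card_bool, ← Nat.cast_smul_eq_nsmul ℂ]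
    rw [hsumM, smul_smul, inv_mul_cancel₀ hcne, one_smul]
  have key : M - localApprox dim Y M
      = (((N * 2 ^ N : ℕ)) : ℂ)⁻¹ • ∑ p : ZMod N, ∑ ε : OutT dim Y → Bool,
          (M - weyl dim Y (shiftE dim Y p) ε * M * (weyl dim Y (shiftE dim Y p) ε)ᴴ) := by
    rw [twirl dim Y M]
    nth_rewrite 1 [hM]
    rw [← smul_sub]
    congr 1
    rw [← Finset.sum_sub_distrib]
    exact Finset.sum_congr rfl (fun p _ => by rw [← Finset.sum_sub_distrib])
  have hterm : ∀ (p : ZMod N) (ε : OutT dim Y → Bool),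
      opNorm dim (M - weyl dim Y (shiftE dim Y p) ε * M * (weyl dim Y (shiftE dim Y p) ε)ᴴ)
        ≤ K := by
    intro p ε
    set W := weyl dim Y (shiftE dim Y p) ε with hW
    have hWu : W * Wᴴ = 1 := weyl_mul_conjTranspose dim Y _ ε
    have hrw : M - W * M * Wᴴ = W * (Wᴴ * M - M * Wᴴ) := by
      rw [mul_sub, ← mul_assoc, ← mul_assoc, hWu, one_mul]
    have hWn : opNorm dim W ≤ 1 := opNorm_le_one_of_unitary dim _ (weyl_unitary dim Y _ ε)
    have hcomm : opNorm dim (Wᴴ * M - M * Wᴴ) ≤ K := by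
      rw [← opNorm_neg, neg_sub]
      exact h Wᴴ (supportedOn_conjTranspose dim (supportedOn_weyl dim Y _ ε))
        (by rw [Matrix.conjTranspose_conjTranspose]; exact hWu)
    have h1 := opNorm_mul_le dim W (Wᴴ * M - M * Wᴴ)
    have n1 := opNorm_nonneg dim (Wᴴ * M - M * Wᴴ)
    have n2 := opNorm_nonneg dim W
    rw [hrw]
    nlinarith
  rw [key, opNorm_smul, norm_inv, Complex.norm_natCast]
  have hsum : opNorm dim (∑ p : ZMod N, ∑ ε : OutT dim Y → Bool,
      (M - weyl dim Y (shiftE dim Y p) ε * M * (weyl dim Y (shiftE dim Y p) ε)ᴴ))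
      ≤ ((N * 2 ^ N : ℕ) : ℝ) * K := by
    calc opNorm dim (∑ p : ZMod N, ∑ ε : OutT dim Y → Bool,
        (M - weyl dim Y (shiftE dim Y p) ε * M * (weyl dim Y (shiftE dim Y p) ε)ᴴ))
        ≤ ∑ p : ZMod N, ∑ ε : OutT dim Y → Bool, opNorm dim
            (M - weyl dim Y (shiftE dim Y p) ε * M * (weyl dim Y (shiftE dim Y p) ε)ᴴ) := by
          refine le_trans (opNorm_sum_le dim _ _) ?_
          exact Finset.sum_le_sum (fun p _ => opNorm_sum_le dim _ _)
      _ ≤ ∑ _p : ZMod N, ∑ _ε : OutT dim Y → Bool, K :=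
          Finset.sum_le_sum (fun p _ => Finset.sum_le_sum (fun ε _ => hterm p ε))
      _ = ((N * 2 ^ N : ℕ) : ℝ) * K := by
          rw [Finset.sum_const, Finset.sum_const, smul_smul, Finset.card_univ, Finset.card_univ,
            ZMod.card, Fintype.card_fun, Fintype.card_bool, nsmul_eq_mul]
  calc ((N * 2 ^ N : ℕ) : ℝ)⁻¹ * opNorm dim (∑ p : ZMod N, ∑ ε : OutT dim Y → Bool,
        (M - weyl dim Y (shiftE dim Y p) ε * M * (weyl dim Y (shiftE dim Y p) ε)ᴴ))
      ≤ ((N * 2 ^ N : ℕ) : ℝ)⁻¹ * (((N * 2 ^ N : ℕ) : ℝ) * K) := by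
        apply mul_le_mul_of_nonneg_left hsum
        positivity
    _ = K := by
        rw [← mul_assoc, inv_mul_cancel₀ (by positivity), one_mul]

lemma localApprox_univ (M : Op dim) : localApprox dim Finset.univ M = M := by
  haveI : IsEmpty {i : Λ // i ∉ (Finset.univ : Finset Λ)} :=
    ⟨fun x => x.2 (Finset.mem_univ x.1)⟩
  ext a b
  simp only [localApprox]
  rw [if_pos (fun i hi => absurd (Finset.mem_univ i) hi)]
  rw [Finset.compl_univ, Finset.prod_empty, inv_one, one_mul, Fintype.sum_unique]
  congr 1 <;> funext i <;> exact dif_pos (Finset.mem_univ i)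
end Weyl
section Geom2
variable {Λ : Type} [Fintype Λ] [DecidableEq Λ]

lemma exists_isNet (dist : Λ → Λ → ℕ) (hmet : IsMetricN dist) (ξ : ℝ) (hξ : 0 ≤ ξ) :
    ∃ net, IsNet dist ξ net := by
  have hP : (Finset.univ.filter
      (fun L : Finset Λ => ∀ i : Λ, ∃ j ∈ L, (dist i j : ℝ) ≤ ξ)).Nonempty := by
    refine ⟨Finset.univ, ?_⟩
    exact Finset.mem_filter.mpr ⟨Finset.mem_univ _, fun i => ⟨i, Finset.mem_univ i,
      by rw [(hmet.1 i i).mpr rfl]; exact_mod_cast hξ⟩⟩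
  obtain ⟨net, hmem, hmin⟩ := Finset.exists_min_image _ Finset.card hP
  simp only [Finset.mem_filter, Finset.mem_univ, true_and] at hmem
  exact ⟨net, hmem, fun L hL =>
    hmin L (by simp only [Finset.mem_filter, Finset.mem_univ, true_and]; exact hL)⟩

lemma exists_isCoarse (dist : Λ → Λ → ℕ) (ξ : ℝ) (net X : Finset Λ)
    (hnet : IsNet dist ξ net) : ∃ C, IsCoarse dist ξ net X C := by
  have hP : (Finset.univ.filter (fun C : Finset Λ =>
      C ⊆ net ∧ ∀ i ∈ X, ∃ j ∈ C, (dist i j : ℝ) ≤ ξ)).Nonempty := by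
    refine ⟨net, ?_⟩
    simp only [Finset.mem_filter, Finset.mem_univ, true_and]
    exact ⟨Finset.Subset.refl net, fun i _ => hnet.1 i⟩
  obtain ⟨Cm, hmem, hmin⟩ := Finset.exists_min_image _ Finset.card hP
  simp only [Finset.mem_filter, Finset.mem_univ, true_and] at hmem
  exact ⟨Cm, hmem.1, hmem.2, fun C' h1 h2 =>
    hmin C' (by simp only [Finset.mem_filter, Finset.mem_univ, true_and]; exact ⟨h1, h2⟩)⟩

lemma lt_setDist_ball_compl (dist : Λ → Λ → ℕ) (hmet : IsMetricN dist) (Z : Finset Λ)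
    (hZ : Z.Nonempty) (r : ℝ) (hc : ((ball dist Z r)ᶜ : Finset Λ).Nonempty) :
    r < (setDist dist Z ((ball dist Z r)ᶜ) : ℝ) := by
  obtain ⟨i₀, hi₀⟩ := hZ
  obtain ⟨j₀, hj₀⟩ := hc
  have hSne : {n : ℕ | ∃ i ∈ Z, ∃ j ∈ (ball dist Z r)ᶜ, dist i j = n}.Nonempty :=
    ⟨dist i₀ j₀, i₀, hi₀, j₀, hj₀, rfl⟩
  unfold setDist
  obtain ⟨i, hi, j, hj, hd⟩ := Nat.sInf_mem hSne
  rw [← hd]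
  have hj' : j ∉ ball dist Z r := Finset.mem_compl.mp hj
  simp only [ball, Finset.mem_filter, Finset.mem_univ, true_and, not_exists, not_and,
    not_le] at hj'
  have h2 := hj' i hi
  rw [hmet.2.1 i j]
  exact h2

lemma sum_anorm_le (dist : Λ → Λ → ℕ) (hmet : IsMetricN dist) (dim : Λ → ℕ)
    (a : Finset Λ → Op dim) (g₂ : ℝ) (ξ₂ : ℕ)
    (haext : ∀ i : Λ, ∑ Z ∈ Finset.univ.filter
      (fun Z : Finset Λ => i ∈ Z ∧ diam dist Z ≤ ξ₂), opNorm dim (a Z) ≤ g₂)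
    (X : Finset Λ) (r : ℝ) :
    ∑ Z ∈ Finset.univ.filter (fun Z : Finset Λ =>
        diam dist Z ≤ ξ₂ ∧ (ball dist Z r ∩ X).Nonempty), opNorm dim (a Z)
      ≤ g₂ * ((ball dist X r).card : ℝ) := by
  classical
  set T := ball dist X r with hT
  set F := Finset.univ.filter (fun Z : Finset Λ =>
    diam dist Z ≤ ξ₂ ∧ (ball dist Z r ∩ X).Nonempty) with hF
  have hwit : ∀ Z ∈ F, (T.filter (fun w => w ∈ Z)).Nonempty := by
    intro Z hZ
    simp only [hF, Finset.mem_filter, Finset.mem_univ, true_and] at hZ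
    obtain ⟨hdiam, x, hx⟩ := hZ
    rw [Finset.mem_inter] at hx
    have hx1 := hx.1
    simp only [ball, Finset.mem_filter, Finset.mem_univ, true_and] at hx1
    obtain ⟨z, hzZ, hzd⟩ := hx1
    refine ⟨z, ?_⟩
    rw [Finset.mem_filter]
    refine ⟨?_, hzZ⟩
    simp only [hT, ball, Finset.mem_filter, Finset.mem_univ, true_and]
    refine ⟨x, hx.2, ?_⟩
    rw [hmet.2.1 z x]
    exact hzd
  calc ∑ Z ∈ F, opNorm dim (a Z)
      ≤ ∑ Z ∈ F, ∑ _w ∈ T.filter (fun w => w ∈ Z), opNorm dim (a Z) := by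
        refine Finset.sum_le_sum (fun Z hZ => ?_)
        rw [Finset.sum_const, nsmul_eq_mul]
        have h1 : (1:ℝ) ≤ ((T.filter (fun w => w ∈ Z)).card : ℝ) := by
          exact_mod_cast Finset.card_pos.mpr (hwit Z hZ)
        nlinarith [opNorm_nonneg dim (a Z)]
    _ = ∑ Z ∈ F, ∑ w ∈ T, if w ∈ Z then opNorm dim (a Z) else 0 := by
        exact Finset.sum_congr rfl (fun Z _ => Finset.sum_filter _ _)
    _ = ∑ w ∈ T, ∑ Z ∈ F, if w ∈ Z then opNorm dim (a Z) else 0 := Finset.sum_comm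
    _ ≤ ∑ _w ∈ T, g₂ := by
        refine Finset.sum_le_sum (fun w _ => ?_)
        rw [← Finset.sum_filter]
        refine le_trans (Finset.sum_le_sum_of_subset_of_nonneg ?_
          (fun Z _ _ => opNorm_nonneg dim (a Z))) (haext w)
        intro Z hZ
        simp only [hF, Finset.mem_filter, Finset.mem_univ, true_and] at hZ ⊢
        exact ⟨hZ.2, hZ.1.1⟩
    _ = g₂ * (T.card : ℝ) := by rw [Finset.sum_const, nsmul_eq_mul, mul_comm]

lemma card_ball_le {D : ℕ} {γ : ℝ} {dist : Λ → Λ → ℕ} (hmet : IsMetricN dist)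
    (hgeom : GeomConst D γ dist) (X CX : Finset Λ) (ξ r : ℝ)
    (hcov : ∀ i ∈ X, ∃ j ∈ CX, (dist i j : ℝ) ≤ ξ) (h1 : 1 ≤ r + ξ) :
    ((ball dist X r).card : ℝ) ≤ (CX.card : ℝ) * (γ * (2 * (r + ξ)) ^ D) := by
  classical
  have hsub : ball dist X r ⊆ CX.biUnion (fun j => ball dist {j} (r + ξ)) := by
    intro w hw
    simp only [ball, Finset.mem_filter, Finset.mem_univ, true_and] at hw
    obtain ⟨x, hxX, hxd⟩ := hw
    obtain ⟨j, hjC, hjd⟩ := hcov x hxX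
    rw [Finset.mem_biUnion]
    refine ⟨j, hjC, ?_⟩
    simp only [ball, Finset.mem_filter, Finset.mem_univ, true_and]
    refine ⟨j, Finset.mem_singleton_self j, ?_⟩
    have htri : (dist w j : ℕ) ≤ dist w x + dist x j := hmet.2.2 w x j
    calc (dist w j : ℝ) ≤ (dist w x : ℝ) + (dist x j : ℝ) := by exact_mod_cast htri
      _ ≤ r + ξ := add_le_add hxd hjd
  calc ((ball dist X r).card : ℝ)
      ≤ ((CX.biUnion (fun j => ball dist {j} (r + ξ))).card : ℝ) := by
        exact_mod_cast Finset.card_le_card hsub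
    _ ≤ ∑ j ∈ CX, ((ball dist {j} (r + ξ)).card : ℝ) := by
        exact_mod_cast Finset.card_biUnion_le
    _ ≤ ∑ _j ∈ CX, γ * (2 * (r + ξ)) ^ D :=
        Finset.sum_le_sum (fun j _ => hgeom.2.1 j (r + ξ) h1)
    _ = (CX.card : ℝ) * (γ * (2 * (r + ξ)) ^ D) := by rw [Finset.sum_const, nsmul_eq_mul]

end Geom2
/-- Lemma 3: quasi-locality of the interaction terms of a short-range
operator after time evolution by a Hamiltonian satisfying a Lieb–Robinson bound. -/
theorem quasi_locality_after_time_evolution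
    (D : ℕ) (hD : 0 < D) (γ : ℝ) (hγ : 1 ≤ γ)
    (Λ : Type) [Fintype Λ] [DecidableEq Λ]
    (dist : Λ → Λ → ℕ) (hmet : IsMetricN dist) (hgeom : GeomConst D γ dist)
    (dim : Λ → ℕ) (hdim : ∀ i, 0 < dim i)
    (ξ₁ : ℝ) (hξ₁ : 0 < ξ₁) (ξ₂ ξt₂ : ℕ) (hξ₂ : 0 < ξ₂) (hξt₂ : ξ₂ ≤ ξt₂)
    (v C g₂ t : ℝ) (hv : 0 ≤ v) (hC : 0 < C) (hg₂ : 0 < g₂)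
    (A₁ : Op dim) (hA₁ : A₁.IsHermitian)
    (hLR : ∀ X Y : Finset Λ,
      ∀ net CX : Finset Λ, IsNet dist (ξ₂ : ℝ) net → IsCoarse dist (ξ₂ : ℝ) net X CX →
      ∀ OX OY : Op dim, SupportedOn dim X OX → SupportedOn dim Y OY →
        commNorm dim (heis dim A₁ t OX) OY
          ≤ C * (CX.card : ℝ) ^ 2 *
            Real.exp (-((setDist dist X Y : ℝ) - v * |t|) / ξ₁) *
            opNorm dim OX * opNorm dim OY)
    (a : Finset Λ → Op dim)
    (hasupp : ∀ Z, SupportedOn dim Z (a Z))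
    (haext : ∀ i : Λ,
      ∑ Z ∈ Finset.univ.filter (fun Z : Finset Λ => i ∈ Z ∧ diam dist Z ≤ ξ₂),
          opNorm dim (a Z)
        ≤ g₂) :
    ∀ X : Finset Λ, ∀ s₀ : ℝ, 0 < s₀ →
    ∀ net CX : Finset Λ, IsNet dist (s₀ * ξt₂) net → IsCoarse dist (s₀ * ξt₂) net X CX →
      ((∀ s : ℕ, 2 ≤ s →
        ∑ Z ∈ Finset.univ.filter (fun Z : Finset Λ => diam dist Z ≤ ξ₂ ∧
            (ball dist Z ((s : ℝ) * ξt₂) ∩ X).Nonempty),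
            opNorm dim
              (localApprox dim (ball dist Z ((s : ℝ) * ξt₂)) (heis dim A₁ t (a Z)) -
                localApprox dim (ball dist Z (((s : ℝ) - 1) * ξt₂)) (heis dim A₁ t (a Z)))
          ≤ 2 * (2 * (ξt₂ : ℝ)) ^ D * C * γ ^ 3 * g₂ * Real.exp (v * |t| / ξ₁) *
            CX.card * ((s : ℝ) + s₀) ^ D * Real.exp (-((s : ℝ) - 1) * (ξt₂ : ℝ) / ξ₁)) ∧
      (∑ Z ∈ Finset.univ.filter (fun Z : Finset Λ => diam dist Z ≤ ξ₂ ∧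
            (ball dist Z (ξt₂ : ℝ) ∩ X).Nonempty),
            opNorm dim (localApprox dim (ball dist Z (ξt₂ : ℝ)) (heis dim A₁ t (a Z)))
          ≤ (2 * (ξt₂ : ℝ)) ^ D * g₂ * γ * CX.card * (s₀ + 1) ^ D)) := by
  intro X s₀ hs₀ net CX hnet hCX
  have hξ₂R : (1:ℝ) ≤ (ξ₂:ℝ) := by exact_mod_cast hξ₂
  have hξt₂R : (1:ℝ) ≤ (ξt₂:ℝ) := le_trans hξ₂R (by exact_mod_cast hξt₂)
  have hξt₂0 : (0:ℝ) ≤ (ξt₂:ℝ) := by positivity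
  have hs₀ξ : (0:ℝ) ≤ s₀ * (ξt₂:ℝ) := by positivity
  obtain ⟨net₂, hnet₂⟩ := exists_isNet dist hmet (ξ₂:ℝ) (by positivity)
  -- coarse sets at scale ξ₂ for each Z, with cardinality at most γ
  have hCZ : ∀ Z : Finset Λ, diam dist Z ≤ ξ₂ →
      ∃ CZ, IsCoarse dist (ξ₂:ℝ) net₂ Z CZ ∧ (CZ.card : ℝ) ≤ γ := by
    intro Z hdiam
    obtain ⟨CZ, hCZ⟩ := exists_isCoarse dist (ξ₂:ℝ) net₂ Z hnet₂
    refine ⟨CZ, hCZ, ?_⟩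
    have hmax := hgeom.2.2.1 (ξ₂:ℝ) hξ₂R net₂ Z CZ hnet₂ hCZ
    have hratio : γ * (((diam dist Z : ℝ))/(ξ₂:ℝ))^D ≤ γ := by
      have h1 : ((diam dist Z : ℝ))/(ξ₂:ℝ) ≤ 1 := by
        rw [div_le_one (by positivity)]
        exact_mod_cast hdiam
      have h2 : (0:ℝ) ≤ ((diam dist Z : ℝ))/(ξ₂:ℝ) := by positivity
      nlinarith [pow_le_one₀ (n := D) h2 h1]
    exact le_trans hmax (max_le hγ hratio)
  -- the key error estimate
  have hball : ∀ Z : Finset Λ, diam dist Z ≤ ξ₂ → Z.Nonempty → ∀ ρ r : ℝ, ρ ≤ r →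
      opNorm dim (heis dim A₁ t (a Z) -
          localApprox dim (ball dist Z r) (heis dim A₁ t (a Z)))
        ≤ C * γ^2 * Real.exp (-(ρ - v * |t|)/ξ₁) * opNorm dim (a Z) := by
    intro Z hdiam hZne ρ r hρr
    obtain ⟨CZ, hCZc, hCZγ⟩ := hCZ Z hdiam
    have hRHS0 : 0 ≤ C * γ^2 * Real.exp (-(ρ - v * |t|)/ξ₁) * opNorm dim (a Z) := by
      have := opNorm_nonneg dim (a Z)
      have hg : (0:ℝ) ≤ γ := le_trans zero_le_one hγ
      positivity
    by_cases hBc : (((ball dist Z r)ᶜ : Finset Λ)).Nonempty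
    · apply opNorm_sub_localApprox_le dim (ball dist Z r) hdim
      intro W hWsupp hWuni
      have hd := lt_setDist_ball_compl dist hmet Z hZne r hBc
      have hLRapp := hLR Z ((ball dist Z r)ᶜ) net₂ CZ hnet₂ hCZc (a Z) W (hasupp Z) hWsupp
      have hWle : opNorm dim W ≤ 1 := opNorm_le_one_of_unitary dim W hWuni
      have hcard2 : ((CZ.card : ℝ))^2 ≤ γ^2 := by
        have : (0:ℝ) ≤ (CZ.card : ℝ) := by positivity
        nlinarith
      have hexp : Real.exp (-((setDist dist Z ((ball dist Z r)ᶜ) : ℝ) - v * |t|)/ξ₁)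
          ≤ Real.exp (-(ρ - v * |t|)/ξ₁) := by
        apply Real.exp_le_exp.mpr
        have hρd : ρ ≤ (setDist dist Z ((ball dist Z r)ᶜ) : ℝ) :=
          le_of_lt (lt_of_le_of_lt hρr hd)
        have h3 : -((setDist dist Z ((ball dist Z r)ᶜ) : ℝ) - v * |t|)
            ≤ -(ρ - v * |t|) := by linarith
        exact div_le_div_of_nonneg_right h3 hξ₁.le
      exact le_trans hLRapp (by
        have n0 := opNorm_nonneg dim (a Z)
        have e2 := Real.exp_pos (-(ρ - v * |t|)/ξ₁)
        have e1 := Real.exp_pos (-((setDist dist Z ((ball dist Z r)ᶜ) : ℝ) - v * |t|)/ξ₁)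
        have hg : (0:ℝ) ≤ γ := le_trans zero_le_one hγ
        have n1 := opNorm_nonneg dim W
        calc C * (CZ.card : ℝ)^2 *
              Real.exp (-((setDist dist Z ((ball dist Z r)ᶜ) : ℝ) - v * |t|)/ξ₁) *
              opNorm dim (a Z) * opNorm dim W
            ≤ C * (CZ.card : ℝ)^2 *
              Real.exp (-((setDist dist Z ((ball dist Z r)ᶜ) : ℝ) - v * |t|)/ξ₁) *
              opNorm dim (a Z) * 1 := by
              apply mul_le_mul_of_nonneg_left hWle
              positivity
          _ = C * (CZ.card : ℝ)^2 *
              Real.exp (-((setDist dist Z ((ball dist Z r)ᶜ) : ℝ) - v * |t|)/ξ₁) *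
              opNorm dim (a Z) := mul_one _
          _ ≤ C * γ^2 * Real.exp (-(ρ - v * |t|)/ξ₁) * opNorm dim (a Z) := by
              apply mul_le_mul_of_nonneg_right _ n0
              have h5 : (CZ.card : ℝ)^2 *
                  Real.exp (-((setDist dist Z ((ball dist Z r)ᶜ) : ℝ) - v * |t|)/ξ₁)
                  ≤ γ^2 * Real.exp (-(ρ - v * |t|)/ξ₁) :=
                mul_le_mul hcard2 hexp e1.le (by positivity)
              rw [mul_assoc, mul_assoc]
              exact mul_le_mul_of_nonneg_left h5 hC.le)
    · rw [Finset.not_nonempty_iff_eq_empty] at hBc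
      have hBu : ball dist Z r = Finset.univ := by
        rwa [← Finset.compl_eq_empty_iff]
      rw [hBu, localApprox_univ, sub_self, opNorm_zero]
      exact hRHS0
  constructor
  · -- part (i)
    intro s hs
    have hsR : (2:ℝ) ≤ (s:ℝ) := by exact_mod_cast hs
    set ρ := ((s:ℝ) - 1) * (ξt₂:ℝ) with hρ
    set E := 2 * C * γ^2 * Real.exp (-(ρ - v * |t|)/ξ₁) with hE
    have hE0 : 0 ≤ E := by
      have hg : (0:ℝ) ≤ γ := le_trans zero_le_one hγ
      positivity
    have hperZ : ∀ Z ∈ Finset.univ.filter (fun Z : Finset Λ => diam dist Z ≤ ξ₂ ∧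
        (ball dist Z ((s : ℝ) * ξt₂) ∩ X).Nonempty),
        opNorm dim
          (localApprox dim (ball dist Z ((s : ℝ) * ξt₂)) (heis dim A₁ t (a Z)) -
            localApprox dim (ball dist Z (((s : ℝ) - 1) * ξt₂)) (heis dim A₁ t (a Z)))
          ≤ E * opNorm dim (a Z) := by
      intro Z hZ
      simp only [Finset.mem_filter, Finset.mem_univ, true_and] at hZ
      obtain ⟨hdiam, x, hx⟩ := hZ
      have hZne : Z.Nonempty := by
        rw [Finset.mem_inter] at hx
        have hx1 := hx.1
        simp only [ball, Finset.mem_filter, Finset.mem_univ, true_and] at hx1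
        obtain ⟨z, hz, _⟩ := hx1
        exact ⟨z, hz⟩
      have h1 := hball Z hdiam hZne ρ ((s:ℝ) * ξt₂) (by
        rw [hρ]
        apply mul_le_mul_of_nonneg_right _ hξt₂0
        linarith)
      have h2 := hball Z hdiam hZne ρ (((s:ℝ) - 1) * ξt₂) (le_of_eq hρ)
      calc opNorm dim (localApprox dim (ball dist Z ((s : ℝ) * ξt₂))
              (heis dim A₁ t (a Z)) -
              localApprox dim (ball dist Z (((s : ℝ) - 1) * ξt₂)) (heis dim A₁ t (a Z)))
          ≤ (opNorm dim (localApprox dim (ball dist Z ((s : ℝ) * ξt₂))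
                (heis dim A₁ t (a Z)) - heis dim A₁ t (a Z))) +
            (opNorm dim (heis dim A₁ t (a Z) - localApprox dim
                (ball dist Z (((s : ℝ) - 1) * ξt₂)) (heis dim A₁ t (a Z)))) :=
            opNorm_sub_le_add dim _ _ _
        _ ≤ C * γ^2 * Real.exp (-(ρ - v * |t|)/ξ₁) * opNorm dim (a Z) +
            C * γ^2 * Real.exp (-(ρ - v * |t|)/ξ₁) * opNorm dim (a Z) := by
            rw [opNorm_sub_rev]
            exact add_le_add h1 h2
        _ = E * opNorm dim (a Z) := by rw [hE]; ring
    calc ∑ Z ∈ Finset.univ.filter (fun Z : Finset Λ => diam dist Z ≤ ξ₂ ∧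
            (ball dist Z ((s : ℝ) * ξt₂) ∩ X).Nonempty),
          opNorm dim
            (localApprox dim (ball dist Z ((s : ℝ) * ξt₂)) (heis dim A₁ t (a Z)) -
              localApprox dim (ball dist Z (((s : ℝ) - 1) * ξt₂)) (heis dim A₁ t (a Z)))
        ≤ ∑ Z ∈ Finset.univ.filter (fun Z : Finset Λ => diam dist Z ≤ ξ₂ ∧
            (ball dist Z ((s : ℝ) * ξt₂) ∩ X).Nonempty), E * opNorm dim (a Z) :=
          Finset.sum_le_sum hperZ
      _ = E * ∑ Z ∈ Finset.univ.filter (fun Z : Finset Λ => diam dist Z ≤ ξ₂ ∧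
            (ball dist Z ((s : ℝ) * ξt₂) ∩ X).Nonempty), opNorm dim (a Z) :=
          (Finset.mul_sum _ _ _).symm
      _ ≤ E * (g₂ * ((ball dist X ((s : ℝ) * ξt₂)).card : ℝ)) :=
          mul_le_mul_of_nonneg_left
            (sum_anorm_le dist hmet dim a g₂ ξ₂ haext X ((s : ℝ) * ξt₂)) hE0
      _ ≤ E * (g₂ * ((CX.card : ℝ) * (γ * (2 * ((s : ℝ) * ξt₂ + s₀ * ξt₂)) ^ D))) := by
          apply mul_le_mul_of_nonneg_left _ hE0
          apply mul_le_mul_of_nonneg_left _ hg₂.le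
          apply card_ball_le hmet hgeom X CX (s₀ * ξt₂) ((s : ℝ) * ξt₂) hCX.2.1
          nlinarith
      _ = 2 * (2 * (ξt₂ : ℝ)) ^ D * C * γ ^ 3 * g₂ * Real.exp (v * |t| / ξ₁) *
            CX.card * ((s : ℝ) + s₀) ^ D * Real.exp (-((s : ℝ) - 1) * (ξt₂ : ℝ) / ξ₁) := by
          rw [hE, hρ]
          rw [show (2 * ((s : ℝ) * ξt₂ + s₀ * ξt₂)) ^ D
              = (2 * (ξt₂ : ℝ)) ^ D * ((s : ℝ) + s₀) ^ D from by
            rw [← mul_pow]; congr 1; ring]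
          rw [show Real.exp (-(((s:ℝ) - 1) * (ξt₂:ℝ) - v * |t|)/ξ₁)
              = Real.exp (v * |t| / ξ₁) * Real.exp (-((s : ℝ) - 1) * (ξt₂ : ℝ) / ξ₁) from by
            rw [← Real.exp_add]; congr 1; ring]
          ring
  · -- part (ii)
    have hperZ : ∀ Z ∈ Finset.univ.filter (fun Z : Finset Λ => diam dist Z ≤ ξ₂ ∧
        (ball dist Z (ξt₂ : ℝ) ∩ X).Nonempty),
        opNorm dim (localApprox dim (ball dist Z (ξt₂ : ℝ)) (heis dim A₁ t (a Z)))
          ≤ opNorm dim (a Z) := by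
      intro Z _
      exact le_trans (opNorm_localApprox_le dim _ hdim _) (opNorm_heis_le dim A₁ hA₁ t (a Z))
    calc ∑ Z ∈ Finset.univ.filter (fun Z : Finset Λ => diam dist Z ≤ ξ₂ ∧
            (ball dist Z (ξt₂ : ℝ) ∩ X).Nonempty),
          opNorm dim (localApprox dim (ball dist Z (ξt₂ : ℝ)) (heis dim A₁ t (a Z)))
        ≤ ∑ Z ∈ Finset.univ.filter (fun Z : Finset Λ => diam dist Z ≤ ξ₂ ∧
            (ball dist Z (ξt₂ : ℝ) ∩ X).Nonempty), opNorm dim (a Z) :=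
          Finset.sum_le_sum hperZ
      _ ≤ g₂ * ((ball dist X (ξt₂ : ℝ)).card : ℝ) :=
          sum_anorm_le dist hmet dim a g₂ ξ₂ haext X (ξt₂ : ℝ)
      _ ≤ g₂ * ((CX.card : ℝ) * (γ * (2 * ((ξt₂ : ℝ) + s₀ * ξt₂)) ^ D)) := by
          apply mul_le_mul_of_nonneg_left _ hg₂.le
          apply card_ball_le hmet hgeom X CX (s₀ * ξt₂) (ξt₂ : ℝ) hCX.2.1
          linarith
      _ = (2 * (ξt₂ : ℝ)) ^ D * g₂ * γ * CX.card * (s₀ + 1) ^ D := by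
          rw [show (2 * ((ξt₂ : ℝ) + s₀ * ξt₂)) ^ D
              = (2 * (ξt₂ : ℝ)) ^ D * (s₀ + 1) ^ D from by
            rw [← mul_pow]; congr 1; ring]
          ring
end LightCone
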